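/- Let d ≥ 3 be an integer and define, for δ ∈ (0,1) with K(δ) ≠ d−1, R(δ) = (K(δ) − 2)^{−(d−3)/2} K(δ)^{d−1} (K(δ) + 2)^{−(d+1)/2} ((d−1)/K(δ) − 1)^{−2}, where K(δ) = 2/(1 − (1−δ)^{2/(d−1)}). Then R(δ) → 1 as δ → 0⁺; that is, the asymptotic relative efficiency ARE = R(δ)^{−1} of the ESL estimator relative to least squares tends to 1 as δ → 0. -/

import Mathlib

/-- `K(δ) = 2/(1 − (1−δ)^{2/(d−1)})` (real power). -/
noncomputable def Kfun (d : ℕ) (δ : ℝ) : ℝ :=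
  2 / (1 - (1 - δ) ^ (2 / ((d : ℝ) - 1)))

/-- `R(δ) = (K(δ)−2)^{−(d−3)/2} K(δ)^{d−1} (K(δ)+2)^{−(d+1)/2} ((d−1)/K(δ) − 1)^{−2}`,
where the fractional exponents are real powers and the last factor is an integer power. -/
noncomputable def Rfun (d : ℕ) (δ : ℝ) : ℝ :=
  (Kfun d δ - 2) ^ (-(((d : ℝ) - 3) / 2)) * (Kfun d δ) ^ ((d : ℝ) - 1) *
    (Kfun d δ + 2) ^ (-(((d : ℝ) + 1) / 2)) *
    (((d : ℝ) - 1) / Kfun d δ - 1) ^ (-2 : ℤ)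

open Filter Set Topology

lemma Kfun_tendsto_atTop (d : ℕ) (hd : 3 ≤ d) :
    Tendsto (Kfun d) (𝓝[>] (0:ℝ)) atTop := by
  have hd3 : (3:ℝ) ≤ (d:ℝ) := by exact_mod_cast hd
  set e : ℝ := 2 / ((d : ℝ) - 1) with he
  have he0 : 0 < e := by
    apply div_pos (by norm_num)
    linarith
  have h1 : Tendsto (fun δ : ℝ => 1 - (1 - δ) ^ e) (𝓝[>] (0:ℝ)) (𝓝[>] (0:ℝ)) := by
    apply tendsto_nhdsWithin_of_tendsto_nhds_of_eventually_within
    · have hbase : Tendsto (fun δ : ℝ => 1 - δ) (𝓝[>] (0:ℝ)) (𝓝 1) := by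
        have : Tendsto (fun δ : ℝ => 1 - δ) (𝓝 (0:ℝ)) (𝓝 (1 - 0)) :=
          (tendsto_const_nhds (x := (1:ℝ))).sub tendsto_id
        simpa using this.mono_left nhdsWithin_le_nhds
      have := hbase.rpow_const (p := e) (Or.inl one_ne_zero)
      rw [Real.one_rpow] at this
      have : Tendsto (fun δ : ℝ => 1 - (1 - δ) ^ e) (𝓝[>] (0:ℝ)) (𝓝 (1 - 1)) :=
        tendsto_const_nhds.sub this
      simpa using this
    · have hmem : Set.Ioo (0:ℝ) 1 ∈ 𝓝[>] (0:ℝ) :=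
        Ioo_mem_nhdsGT_of_mem (by constructor <;> norm_num)
      filter_upwards [hmem] with δ hδ
      have h1δ : (1 - δ) ^ e < 1 :=
        Real.rpow_lt_one (by linarith [hδ.2]) (by linarith [hδ.1]) he0
      simpa using sub_pos.mpr h1δ
  have h2 : Tendsto (fun x : ℝ => 2 * x⁻¹) (𝓝[>] (0:ℝ)) atTop :=
    tendsto_inv_nhdsGT_zero.const_mul_atTop (by norm_num)
  have := h2.comp h1
  refine this.congr' (Eventually.of_forall fun δ => ?_)
  simp only [Function.comp_apply, Kfun, div_eq_mul_inv, he]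

lemma g_tendsto_one (d : ℕ) (hd : 3 ≤ d) :
    Tendsto (fun K : ℝ => (K - 2) ^ (-(((d : ℝ) - 3) / 2)) * K ^ ((d : ℝ) - 1) *
      (K + 2) ^ (-(((d : ℝ) + 1) / 2)) * (((d : ℝ) - 1) / K - 1) ^ (-2 : ℤ))
      atTop (𝓝 1) := by
  set a : ℝ := -(((d : ℝ) - 3) / 2)
  set b : ℝ := (d : ℝ) - 1
  set c : ℝ := -(((d : ℝ) + 1) / 2)
  have habc : a + b + c = 0 := by simp only [a, b, c]; ring
  have heq : ∀ᶠ K : ℝ in atTop,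
      (K - 2) ^ a * K ^ b * (K + 2) ^ c * (((d : ℝ) - 1) / K - 1) ^ (-2 : ℤ)
      = (1 - 2 / K) ^ a * (1 + 2 / K) ^ c * (((d : ℝ) - 1) / K - 1) ^ (-2 : ℤ) := by
    filter_upwards [eventually_gt_atTop (2:ℝ)] with K hK
    have hK0 : 0 < K := by linarith
    have h1 : K - 2 = K * (1 - 2 / K) := by field_simp
    have h2 : K + 2 = K * (1 + 2 / K) := by field_simp
    have hp1 : (0:ℝ) ≤ 1 - 2 / K := by
      have : 2 / K < 1 := (div_lt_one hK0).mpr hK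
      linarith
    have hp2 : (0:ℝ) ≤ 1 + 2 / K := by positivity
    rw [h1, h2, Real.mul_rpow hK0.le hp1, Real.mul_rpow hK0.le hp2]
    have hKpow : K ^ a * K ^ b * K ^ c = 1 := by
      rw [← Real.rpow_add hK0, ← Real.rpow_add hK0, habc, Real.rpow_zero]
    calc K ^ a * (1 - 2 / K) ^ a * K ^ b * (K ^ c * (1 + 2 / K) ^ c) *
          (((d : ℝ) - 1) / K - 1) ^ (-2 : ℤ)
        = (K ^ a * K ^ b * K ^ c) * ((1 - 2 / K) ^ a * (1 + 2 / K) ^ c *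
          (((d : ℝ) - 1) / K - 1) ^ (-2 : ℤ)) := by ring
      _ = _ := by rw [hKpow, one_mul]
  rw [Filter.tendsto_congr' heq]
  have hdiv : Tendsto (fun K : ℝ => 2 / K) atTop (𝓝 0) :=
    tendsto_const_nhds.div_atTop tendsto_id
  have t1 : Tendsto (fun K : ℝ => (1 - 2 / K) ^ a) atTop (𝓝 1) := by
    have := (((tendsto_const_nhds (x := (1:ℝ))).sub hdiv).rpow_const (p := a) (Or.inl (by norm_num)))
    simpa using this
  have t2 : Tendsto (fun K : ℝ => (1 + 2 / K) ^ c) atTop (𝓝 1) := by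
    have := (((tendsto_const_nhds (x := (1:ℝ))).add hdiv).rpow_const (p := c) (Or.inl (by norm_num)))
    simpa using this
  have t3 : Tendsto (fun K : ℝ => (((d : ℝ) - 1) / K - 1) ^ (-2 : ℤ)) atTop (𝓝 1) := by
    have hdiv2 : Tendsto (fun K : ℝ => ((d : ℝ) - 1) / K) atTop (𝓝 0) :=
      tendsto_const_nhds.div_atTop tendsto_id
    have hbase : Tendsto (fun K : ℝ => ((d : ℝ) - 1) / K - 1) atTop (𝓝 (-1)) := by
      have := hdiv2.sub (tendsto_const_nhds (x := (1:ℝ)))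
      simpa using this
    have hsq : Tendsto (fun K : ℝ => (((d : ℝ) - 1) / K - 1) ^ (2:ℕ)) atTop (𝓝 1) := by
      have := hbase.pow 2
      norm_num at this
      exact this
    have hinv := hsq.inv₀ (by norm_num)
    norm_num at hinv
    have : ∀ K : ℝ, (((d : ℝ) - 1) / K - 1) ^ (-2 : ℤ)
        = ((((d : ℝ) - 1) / K - 1) ^ (2:ℕ))⁻¹ := by
      intro K; rw [zpow_neg]; norm_cast
    simpa [this] using hinv
  have := (t1.mul t2).mul t3
  simpa using this

/-- for `d ≥ 3`, `R(δ) → 1` as `δ → 0⁺`, i.e. the asymptotic relative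
efficiency `R(δ)⁻¹` of the ESL estimator relative to least squares tends to `1`. -/
theorem Rfun_tendsto_one_at_zero (d : ℕ) (hd : 3 ≤ d) :
    Filter.Tendsto (Rfun d) (nhdsWithin 0 (Set.Ioi 0)) (nhds 1) := by
  have := (g_tendsto_one d hd).comp (Kfun_tendsto_atTop d hd)
  exact this
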